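/- Let H be a complex Hilbert space and J̃ : H → H an anti-conjugation, i.e., a conjugate-linear isometric bijection with J̃∘J̃ = −id. Let T be a compact self-adjoint bounded operator on H satisfying T(J̃v) = −J̃(Tv) for all v ∈ H. If the kernel of T is finite-dimensional, then its complex dimension is an even natural number. -/

import Mathlib

open Module

local notation "⟪" x ", " y "⟫" => @inner ℂ _ _ x y

lemma aux_inner {H : Type*} [NormedAddCommGroup H] [InnerProductSpace ℂ H]
    (J : H → H)
    (hadd : ∀ v w, J (v + w) = J v + J w)
    (hsmul : ∀ (c : ℂ) (v : H), J (c • v) = (starRingEnd ℂ) c • J v)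
    (hnorm : ∀ v, ‖J v‖ = ‖v‖) :
    ∀ x y : H, ⟪J x, J y⟫ = (starRingEnd ℂ) ⟪x, y⟫ := by
  have hre : ∀ x y : H, Complex.re ⟪J x, J y⟫ = Complex.re ⟪x, y⟫ := by
    intro x y
    have h1 := @norm_add_sq ℂ H _ _ _ (J x) (J y)
    have h2 := @norm_add_sq ℂ H _ _ _ x y
    rw [← hadd, hnorm, hnorm, hnorm] at h1
    rw [h2] at h1
    simp only [RCLike.re_to_complex] at h1
    linarith
  intro x y
  have hneg : ∀ v : H, J (-v) = -J v := by
    intro v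
    have := hsmul (-1 : ℂ) v
    simpa using this
  apply Complex.ext
  · simp only [Complex.conj_re]; exact hre x y
  · have h1 : Complex.re (Complex.I * ⟪J x, J y⟫) = Complex.re ⟪J x, Complex.I • J y⟫ := by
      rw [inner_smul_right]
    have h2 : Complex.I • J y = -J (Complex.I • y) := by
      rw [hsmul]; simp
    have h4 : Complex.re ⟪J x, Complex.I • J y⟫ = -Complex.re ⟪x, Complex.I • y⟫ := by
      rw [h2, ← hneg, hre x (-(Complex.I • y)), inner_neg_right]
      rw [Complex.neg_re]
    have h6 : Complex.re (Complex.I * ⟪x, y⟫) = Complex.re ⟪x, Complex.I • y⟫ := by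
      rw [inner_smul_right]
    simp only [Complex.mul_re, Complex.I_re, Complex.I_im, zero_mul, one_mul, zero_sub] at h1 h6
    simp only [Complex.conj_im]
    linarith [h1.trans h4, h6]

lemma aux_even {H : Type*} [NormedAddCommGroup H] [InnerProductSpace ℂ H] [CompleteSpace H]
    (J : H → H)
    (hadd : ∀ v w, J (v + w) = J v + J w)
    (hsmul : ∀ (c : ℂ) (v : H), J (c • v) = (starRingEnd ℂ) c • J v)
    (hnorm : ∀ v, ‖J v‖ = ‖v‖)
    (hJJ : ∀ v, J (J v) = -v) :
    ∀ n : ℕ, ∀ V : Submodule ℂ H, FiniteDimensional ℂ V → finrank ℂ V = n →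
      (∀ v ∈ V, J v ∈ V) → Even n := by
  have hJinner := aux_inner J hadd hsmul hnorm
  have hneg : ∀ v : H, J (-v) = -J v := by
    intro v
    have := hsmul (-1 : ℂ) v
    simpa using this
  have horth : ∀ v : H, ⟪J v, v⟫ = 0 := by
    intro v
    have h1 : ⟪J v, J (J v)⟫ = (starRingEnd ℂ) ⟪v, J v⟫ := hJinner v (J v)
    rw [hJJ, inner_neg_right, inner_conj_symm] at h1
    linear_combination -h1 / 2
  intro n
  induction n using Nat.strong_induction_on with
  | _ n IH =>
    intro V hVfin hVrank hVJ
    rcases Nat.eq_zero_or_pos n with h0 | hpos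
    · simp [h0]
    -- pick a nonzero vector of V
    have hVne : V ≠ ⊥ := by
      intro hbot
      rw [hbot, finrank_bot] at hVrank
      omega
    obtain ⟨v, hvV, hv0⟩ := Submodule.exists_mem_ne_zero_of_ne_bot hVne
    have hJv0 : J v ≠ 0 := by
      intro h
      apply hv0
      have hn : ‖v‖ = 0 := by rw [← hnorm v, h, norm_zero]
      exact norm_eq_zero.mp hn
    -- v and J v are linearly independent
    have li : LinearIndependent ℂ ![v, J v] := by
      rw [LinearIndependent.pair_iff]
      intro s t hst
      have h1 : ⟪v, s • v + t • J v⟫ = 0 := by rw [hst]; simp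
      rw [inner_add_right, inner_smul_right, inner_smul_right] at h1
      have h2 : ⟪v, J v⟫ = 0 := by
        rw [← inner_conj_symm, horth]; simp
      rw [h2, mul_zero, add_zero] at h1
      have hs : s = 0 := by
        rcases mul_eq_zero.mp h1 with h | h
        · exact h
        · exact absurd (inner_self_eq_zero.mp h) hv0
      refine ⟨hs, ?_⟩
      rw [hs, zero_smul, zero_add] at hst
      rcases smul_eq_zero.mp hst with h | h
      · exact h
      · exact absurd h hJv0
    set S : Submodule ℂ H := Submodule.span ℂ {v, J v} with hS
    have hScard : finrank ℂ S = 2 := by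
      have hrange : Set.range ![v, J v] = {v, J v} := by
        ext x; simp [Matrix.range_cons, Matrix.range_empty, or_comm]
      rw [hS, ← hrange, finrank_span_eq_card li]
      simp
    have hSV : S ≤ V := by
      rw [hS, Submodule.span_le]
      rintro x (rfl | rfl)
      · exact hvV
      · exact hVJ v hvV
    have hsum := Submodule.finrank_add_inf_finrank_orthogonal (K₁ := S) (K₂ := V) hSV
    set W : Submodule ℂ H := Sᗮ ⊓ V with hW
    have hWfin : FiniteDimensional ℂ W := Submodule.finiteDimensional_of_le inf_le_right
    -- W is J-invariant
    have hWJ : ∀ w ∈ W, J w ∈ W := by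
      intro w hw
      obtain ⟨hwS, hwV⟩ := Submodule.mem_inf.mp hw
      refine Submodule.mem_inf.mpr ⟨?_, hVJ w hwV⟩
      rw [Submodule.mem_orthogonal]
      have hvw : ⟪v, w⟫ = 0 := (Submodule.mem_orthogonal S w).mp hwS v
        (Submodule.subset_span (by simp))
      have hJvw : ⟪J v, w⟫ = 0 := (Submodule.mem_orthogonal S w).mp hwS (J v)
        (Submodule.subset_span (by simp))
      have key1 : ⟪v, J w⟫ = 0 := by
        have : v = J (-(J v)) := by rw [hneg, hJJ]; simp
        rw [this, hJinner, inner_neg_left, hJvw]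
        simp
      have key2 : ⟪J v, J w⟫ = 0 := by
        rw [hJinner, hvw]; simp
      intro u hu
      induction hu using Submodule.span_induction with
      | mem x hx =>
        rcases hx with rfl | rfl
        · exact key1
        · exact key2
      | zero => simp
      | add a b _ _ ha hb => rw [inner_add_left, ha, hb, add_zero]
      | smul c a _ ha => rw [inner_smul_left, ha, mul_zero]
    have hWrank := IH (finrank ℂ W) (by omega) W hWfin rfl hWJ
    rw [hScard, hVrank] at hsum
    obtain ⟨k, hk⟩ := hWrank
    exact ⟨k + 1, by omega⟩

theorem stmt_9 {H : Type*} [NormedAddCommGroup H] [InnerProductSpace ℂ H] [CompleteSpace H]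
    (J : H → H)
    (hadd : ∀ v w, J (v + w) = J v + J w)
    (hsmul : ∀ (c : ℂ) (v : H), J (c • v) = (starRingEnd ℂ) c • J v)
    (hnorm : ∀ v, ‖J v‖ = ‖v‖)
    (hbij : Function.Bijective J)
    (hJJ : ∀ v, J (J v) = -v)
    (T : H →L[ℂ] H) (hcpt : IsCompactOperator ⇑T) (hsa : IsSelfAdjoint T)
    (hTJ : ∀ v, T (J v) = -J (T v))
    (hfin : FiniteDimensional ℂ (LinearMap.ker (T : H →ₗ[ℂ] H))) :
    Even (Module.finrank ℂ (LinearMap.ker (T : H →ₗ[ℂ] H))) := by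
  have hJ0 : J 0 = 0 := by
    have := hsmul 0 0
    simpa using this
  apply aux_even J hadd hsmul hnorm hJJ (finrank ℂ (LinearMap.ker (T : H →ₗ[ℂ] H))) (LinearMap.ker (T : H →ₗ[ℂ] H)) hfin rfl
  intro v hv
  rw [LinearMap.mem_ker] at *
  show T (J v) = 0
  rw [hTJ]
  have hv' : T v = 0 := hv
  rw [hv', hJ0, neg_zero]
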